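/- Let Z be a topological space and let Y be a regular locally Z-compact space, meaning: for every y ∈ Y and every set f⁻¹(W) ∈ O_Z(Y) containing y there exists g⁻¹(V) ∈ O_Z(Y) such that the closure Cl(g⁻¹(V)) of g⁻¹(V) in the space (Y, τ_Y^Z) is compact in (Y, τ_Y^Z) and y ∈ g⁻¹(V) ⊆ Cl(g⁻¹(V)) ⊆ f⁻¹(W). Then the Z-compact open topology t_co^Z on C(Y,Z) is admissible, i.e. the evaluation map e : C_{t_co^Z}(Y,Z) × Y → Z, e(f,y) = f(y), is continuous. -/

import Mathlib

open Set TopologicalSpace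

/-- The family O_Z(Y) of preimages of open sets under continuous maps. -/
def OZ (Y Z : Type*) [TopologicalSpace Y] [TopologicalSpace Z] : Set (Set Y) :=
  {s | ∃ (f : ContinuousMap Y Z) (U : Set Z), IsOpen U ∧ s = f ⁻¹' U}

/-- The Z-topology τ_Y^Z on Y, generated by the subbasis O_Z(Y). -/
def zTop (Y Z : Type*) [TopologicalSpace Y] [TopologicalSpace Z] : TopologicalSpace Y :=
  TopologicalSpace.generateFrom (OZ Y Z)

/-- K is Z-compact if K is compact in (Y, τ_Y^Z). -/
def IsZCompact (Y Z : Type*) [TopologicalSpace Y] [TopologicalSpace Z] (K : Set Y) : Prop :=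
  @IsCompact Y (zTop Y Z) K

/-- The Z-compact open topology on C(Y,Z). -/
def tcoZ (Y Z : Type*) [TopologicalSpace Y] [TopologicalSpace Z] :
    TopologicalSpace (ContinuousMap Y Z) :=
  TopologicalSpace.generateFrom
    {S | ∃ (K : Set Y) (U : Set Z), IsZCompact Y Z K ∧ IsOpen U ∧
      S = {f : ContinuousMap Y Z | f '' K ⊆ U}}

/-- The compact open topology on C(Y,Z). -/
def tco (Y Z : Type*) [TopologicalSpace Y] [TopologicalSpace Z] :
    TopologicalSpace (ContinuousMap Y Z) :=
  TopologicalSpace.generateFrom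
    {S | ∃ (K : Set Y) (U : Set Z), IsCompact K ∧ IsOpen U ∧
      S = {f : ContinuousMap Y Z | f '' K ⊆ U}}

/-- Membership in the Z-Scott family τ_1^Z on O(Y). -/
def Tau1 (Y Z : Type*) [TopologicalSpace Y] [TopologicalSpace Z] (H : Set (Set Y)) : Prop :=
  (∀ s ∈ H, IsOpen s) ∧
  (∀ s ∈ H, s ∈ OZ Y Z → ∀ V : Set Y, IsOpen V → s ⊆ V → V ∈ H) ∧
  (∀ C ⊆ OZ Y Z, ⋃₀ C ∈ H → ∃ F ⊆ C, F.Finite ∧ ⋃₀ F ∈ H)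

/-- Membership in the strong Z-Scott family τ_{1,s}^Z on O(Y). -/
def Tau1s (Y Z : Type*) [TopologicalSpace Y] [TopologicalSpace Z] (H : Set (Set Y)) : Prop :=
  (∀ s ∈ H, IsOpen s) ∧
  (∀ s ∈ H, s ∈ OZ Y Z → ∀ V : Set Y, IsOpen V → s ⊆ V → V ∈ H) ∧
  (∀ C ⊆ OZ Y Z, ⋃₀ C = Set.univ → ∃ F ⊆ C, F.Finite ∧ ⋃₀ F ∈ H)

/-- Scott open families of open sets of Y. -/
def ScottOpen (Y : Type*) [TopologicalSpace Y] (H : Set (Set Y)) : Prop :=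
  (∀ s ∈ H, IsOpen s) ∧
  (∀ s ∈ H, ∀ V : Set Y, IsOpen V → s ⊆ V → V ∈ H) ∧
  (∀ C : Set (Set Y), (∀ c ∈ C, IsOpen c) → ⋃₀ C ∈ H → ∃ F ⊆ C, F.Finite ∧ ⋃₀ F ∈ H)

/-- Strong Scott open families of open sets of Y. -/
def StrongScottOpen (Y : Type*) [TopologicalSpace Y] (H : Set (Set Y)) : Prop :=
  (∀ s ∈ H, IsOpen s) ∧
  (∀ s ∈ H, ∀ V : Set Y, IsOpen V → s ⊆ V → V ∈ H) ∧
  (∀ C : Set (Set Y), (∀ c ∈ C, IsOpen c) → ⋃₀ C = Set.univ →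
    ∃ F ⊆ C, F.Finite ∧ ⋃₀ F ∈ H)

/-- The topology t_1^Z on C(Y,Z). -/
def t1Z (Y Z : Type*) [TopologicalSpace Y] [TopologicalSpace Z] :
    TopologicalSpace (ContinuousMap Y Z) :=
  TopologicalSpace.generateFrom
    {S | ∃ (H : Set (Set Y)) (U : Set Z), Tau1 Y Z H ∧ IsOpen U ∧
      S = {f : ContinuousMap Y Z | f ⁻¹' U ∈ H}}

/-- The topology t_{1,s}^Z on C(Y,Z). -/
def t1sZ (Y Z : Type*) [TopologicalSpace Y] [TopologicalSpace Z] :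
    TopologicalSpace (ContinuousMap Y Z) :=
  TopologicalSpace.generateFrom
    {S | ∃ (H : Set (Set Y)) (U : Set Z), Tau1s Y Z H ∧ IsOpen U ∧
      S = {f : ContinuousMap Y Z | f ⁻¹' U ∈ H}}

/-- The Isbell topology on C(Y,Z). -/
def tIs (Y Z : Type*) [TopologicalSpace Y] [TopologicalSpace Z] :
    TopologicalSpace (ContinuousMap Y Z) :=
  TopologicalSpace.generateFrom
    {S | ∃ (H : Set (Set Y)) (U : Set Z), ScottOpen Y H ∧ IsOpen U ∧
      S = {f : ContinuousMap Y Z | f ⁻¹' U ∈ H}}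

/-- The strong Isbell topology on C(Y,Z). -/
def tsIs (Y Z : Type*) [TopologicalSpace Y] [TopologicalSpace Z] :
    TopologicalSpace (ContinuousMap Y Z) :=
  TopologicalSpace.generateFrom
    {S | ∃ (H : Set (Set Y)) (U : Set Z), StrongScottOpen Y H ∧ IsOpen U ∧
      S = {f : ContinuousMap Y Z | f ⁻¹' U ∈ H}}

/-- A topology t on C(Y,Z) is admissible if the evaluation map is continuous. -/
def Admissible (Y Z : Type*) [TopologicalSpace Y] [TopologicalSpace Z]
    (t : TopologicalSpace (ContinuousMap Y Z)) : Prop :=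
  @Continuous (ContinuousMap Y Z × Y) Z (@instTopologicalSpaceProd _ _ t _) _
    fun p => p.1 p.2

/-- B is bounded in (X, t): every t-open cover of X has a finite subfamily covering B. -/
def BoundedIn {X : Type*} (t : TopologicalSpace X) (B : Set X) : Prop :=
  ∀ C : Set (Set X), (∀ c ∈ C, @IsOpen X t c) → ⋃₀ C = Set.univ →
    ∃ F ⊆ C, F.Finite ∧ B ⊆ ⋃₀ F


/-- Y is corecompact: each point has, inside each open neighborhood U, a smaller open
neighborhood that is bounded in the subspace U of Y. -/
def Corecompact (Y : Type*) [inst : TopologicalSpace Y] : Prop :=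
  ∀ y : Y, ∀ U : Set Y, IsOpen U → y ∈ U →
    ∃ V : Set Y, IsOpen V ∧ y ∈ V ∧ V ⊆ U ∧
      BoundedIn (TopologicalSpace.induced (Subtype.val : U → Y) inst)
        ((Subtype.val : U → Y) ⁻¹' V)

/-- Y is locally bounded. -/
def LocallyBounded (Y : Type*) [inst : TopologicalSpace Y] : Prop :=
  ∀ y : Y, ∀ U : Set Y, IsOpen U → y ∈ U →
    ∃ V : Set Y, IsOpen V ∧ y ∈ V ∧ V ⊆ U ∧ BoundedIn inst V

/-- Y is locally Z-bounded. -/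
def LocallyZBounded (Y Z : Type*) [TopologicalSpace Y] [TopologicalSpace Z] : Prop :=
  ∀ y : Y, ∀ U : Set Y, IsOpen U → y ∈ U →
    ∃ s ∈ OZ Y Z, y ∈ s ∧ s ⊆ U ∧ BoundedIn (zTop Y Z) s

/-- A << U : A is bounded in the set U endowed with the subspace topology
inherited from (Y, τ_Y^Z). -/
def ZWayBelow (Y Z : Type*) [TopologicalSpace Y] [TopologicalSpace Z] (A U : Set Y) : Prop :=
  BoundedIn (TopologicalSpace.induced (Subtype.val : U → Y) (zTop Y Z))
    ((Subtype.val : U → Y) ⁻¹' A)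

/-- Y is Z-corecompact. -/
def ZCorecompact (Y Z : Type*) [TopologicalSpace Y] [TopologicalSpace Z] : Prop :=
  ∀ y : Y, ∀ U : Set Y, IsOpen U → y ∈ U →
    ∃ s ∈ OZ Y Z, y ∈ s ∧ s ⊆ U ∧ ZWayBelow Y Z s U

/-- The topology on O(Y) generated by the sets <K> = { U open : K ⊆ U }, K compact. -/
def kTop (Y : Type*) [TopologicalSpace Y] : TopologicalSpace (TopologicalSpace.Opens Y) :=
  TopologicalSpace.generateFrom
    {S | ∃ K : Set Y, IsCompact K ∧ S = {U : TopologicalSpace.Opens Y | K ⊆ (U : Set Y)}}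

theorem stmt15 (Y Z : Type*) [TopologicalSpace Y] [TopologicalSpace Z]
    (hY : ∀ y : Y, ∀ s ∈ OZ Y Z, y ∈ s →
      ∃ g ∈ OZ Y Z, y ∈ g ∧
        @IsCompact Y (zTop Y Z) (@closure Y (zTop Y Z) g) ∧
        @closure Y (zTop Y Z) g ⊆ s) :
    Admissible Y Z (tcoZ Y Z) := by
  rw [Admissible, @continuous_def]
  intro W hW
  rw [@isOpen_prod_iff _ _ (tcoZ Y Z) _]
  rintro f y hfy
  obtain ⟨g, hgOZ, hyg, hKcpt, hKsub⟩ :=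
    hY y (f ⁻¹' W) ⟨f, W, hW, rfl⟩ hfy
  obtain ⟨h, V, hV, rfl⟩ := hgOZ
  refine ⟨{f' : ContinuousMap Y Z | f' '' (@closure Y (zTop Y Z) (h ⁻¹' V)) ⊆ W},
    h ⁻¹' V, ?_, hV.preimage h.continuous, ?_, hyg, ?_⟩
  · exact TopologicalSpace.GenerateOpen.basic _
      ⟨@closure Y (zTop Y Z) (h ⁻¹' V), W, hKcpt, hW, rfl⟩
  · rintro z ⟨x, hx, rfl⟩
    exact hKsub hx
  · rintro ⟨f', y'⟩ ⟨hf', hy'⟩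
    exact hf' (Set.mem_image_of_mem f' (letI := zTop Y Z; subset_closure hy'))
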